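/- Let G be a finite abelian group of order 2^{m+ℓ}·d with d odd, having exactly f = 2^m - 1 involutions (m ≥ 1, ℓ ≥ 0). If there exists a family F of 3-element subsets of G whose multiset of differences covers each element of G outside the union of a partial spread Σ of type {2^f, 3^e} exactly once, then 2^{m-1}(2^ℓ d - 1) ≡ e (mod 3). -/

import Mathlib

open scoped Classical

/-- The multiset of differences of a triple (finite subset) of an abelian group:
all differences `x - y` with `x ≠ y` in `T`. -/
noncomputable def tripleDiffs {G : Type*} [AddCommGroup G] (T : Finset G) : Multiset G :=
  ((T ×ˢ T).filter (fun p => p.1 ≠ p.2)).val.map (fun p => p.1 - p.2)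

/-- The multiset of differences of a family of triples. -/
noncomputable def famDiffs {G : Type*} [AddCommGroup G] (F : Finset (Finset G)) : Multiset G :=
  F.val.bind tripleDiffs

/-- Let `G` be a finite abelian group of order `2^(m+ℓ) d` with `d` odd, having exactly
`2^m - 1` involutions. If there is a family of 3-subsets of `G` whose multiset of differences
equals `G` minus the union of a partial spread of type `{2^(2^m-1), 3^e}` (each outside element
exactly once), then `2^(m-1) (2^ℓ d - 1) ≡ e (mod 3)`. -/
theorem stmt_5 {G : Type*} [AddCommGroup G] [Fintype G]
    (m ℓ d e : ℕ) (hm : 1 ≤ m) (hd : Odd d)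
    (hcard : Fintype.card G = 2 ^ (m + ℓ) * d)
    (hinv : (Finset.univ.filter (fun x : G => x ≠ 0 ∧ x + x = 0)).card = 2 ^ m - 1)
    (Sp : Finset (AddSubgroup G))
    (htriv : ∀ S ∈ Sp, ∀ S' ∈ Sp, S ≠ S' → S ⊓ S' = ⊥)
    (horders : ∀ S ∈ Sp, Nat.card ↥S = 2 ∨ Nat.card ↥S = 3)
    (h2 : (Sp.filter (fun (S : AddSubgroup G) => Nat.card ↥S = 2)).card = 2 ^ m - 1)
    (h3 : (Sp.filter (fun (S : AddSubgroup G) => Nat.card ↥S = 3)).card = e)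
    (F : Finset (Finset G)) (hF3 : ∀ T ∈ F, T.card = 3)
    (hDF : famDiffs F = (Finset.univ.filter (fun g : G => ∀ S ∈ Sp, g ∉ S)).val) :
    2 ^ (m - 1) * (2 ^ ℓ * d - 1) ≡ e [MOD 3] := by
  classical
  -- each triple contributes 6 differences
  have hc : ∀ T ∈ F, Multiset.card (tripleDiffs T) = 6 := by
    intro T hT
    unfold tripleDiffs
    rw [Multiset.card_map]
    have hoff : ((T ×ˢ T).filter (fun p => p.1 ≠ p.2)) = T.offDiag := by
      ext p
      simp only [Finset.mem_offDiag, Finset.mem_filter, Finset.mem_product]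
      tauto
    show ((T ×ˢ T).filter (fun p => p.1 ≠ p.2)).card = 6
    rw [hoff, Finset.offDiag_card, hF3 T hT]
  have hcard6 : Multiset.card (famDiffs F) = 6 * F.card := by
    unfold famDiffs
    rw [Multiset.card_bind]
    have heq : (Multiset.map (Multiset.card ∘ tripleDiffs) F.val).sum
        = ∑ T ∈ F, Multiset.card (tripleDiffs T) := rfl
    rw [heq, Finset.sum_congr rfl hc, Finset.sum_const, smul_eq_mul, mul_comm]
  -- Sp is nonempty
  have hSpne : Sp.Nonempty := by
    by_contra h
    rw [Finset.not_nonempty_iff_eq_empty] at h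
    subst h
    simp only [Finset.filter_empty, Finset.card_empty] at h2
    have h2m : (2:ℕ) ≤ 2 ^ m := by
      calc (2:ℕ) = 2 ^ 1 := rfl
      _ ≤ 2 ^ m := Nat.pow_le_pow_right (by norm_num) hm
    omega
  set fS : AddSubgroup G → Finset G :=
    fun S => Finset.univ.filter (fun g => g ∈ S ∧ g ≠ 0) with hfS
  have hcardfS : ∀ S ∈ Sp, (fS S).card + 1 = Nat.card ↥S := by
    intro S hS
    have h1 : Nat.card ↥S = (Finset.univ.filter (fun g => g ∈ S)).card := by
      rw [Nat.card_eq_fintype_card, Fintype.card_subtype]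
    have h2' : (Finset.univ.filter (fun g : G => g ∈ S)) = insert 0 (fS S) := by
      ext g
      simp only [hfS, Finset.mem_filter, Finset.mem_univ, Finset.mem_insert, true_and]
      constructor
      · intro hg
        by_cases h0 : g = 0
        · exact Or.inl h0
        · exact Or.inr ⟨hg, h0⟩
      · rintro (rfl | ⟨hg, _⟩)
        · exact S.zero_mem
        · exact hg
    have h0 : (0:G) ∉ fS S := by simp [hfS]
    rw [h1, h2', Finset.card_insert_of_notMem h0]
  -- disjointness
  have hdisj : (Sp : Set (AddSubgroup G)).PairwiseDisjoint fS := by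
    intro S hS S' hS' hne
    simp only [Function.onFun]
    rw [Finset.disjoint_left]
    intro g hg hg'
    simp only [hfS, Finset.mem_filter, Finset.mem_univ, true_and] at hg hg'
    have hmem : g ∈ S ⊓ S' := ⟨hg.1, hg'.1⟩
    rw [htriv S hS S' hS' hne] at hmem
    exact hg.2 (AddSubgroup.mem_bot.mp hmem)
  have hA : (Sp.biUnion fS).card = ∑ S ∈ Sp, (fS S).card :=
    Finset.card_biUnion hdisj
  -- the sum
  have hsum : ∑ S ∈ Sp, (fS S).card = (2 ^ m - 1) + 2 * e := by
    rw [← Finset.sum_filter_add_sum_filter_not Sp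
      (fun (S : AddSubgroup G) => Nat.card ↥S = 2)]
    have hl : ∀ S ∈ Sp.filter (fun (S : AddSubgroup G) => Nat.card ↥S = 2),
        (fS S).card = 1 := by
      intro S hS
      simp only [Finset.mem_filter] at hS
      have := hcardfS S hS.1
      omega
    have hleft : ∑ S ∈ Sp.filter (fun (S : AddSubgroup G) => Nat.card ↥S = 2),
        (fS S).card = 2 ^ m - 1 := by
      rw [Finset.sum_congr rfl hl, Finset.sum_const, smul_eq_mul, h2, mul_one]
    have hfilt : Sp.filter (fun (S : AddSubgroup G) => ¬ Nat.card ↥S = 2)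
        = Sp.filter (fun (S : AddSubgroup G) => Nat.card ↥S = 3) := by
      apply Finset.filter_congr
      intro S hS
      rcases horders S hS with h | h <;> rw [h] <;> omega
    have hr : ∀ S ∈ Sp.filter (fun (S : AddSubgroup G) => Nat.card ↥S = 3),
        (fS S).card = 2 := by
      intro S hS
      simp only [Finset.mem_filter] at hS
      have := hcardfS S hS.1
      omega
    have hright : ∑ S ∈ Sp.filter (fun (S : AddSubgroup G) => ¬ Nat.card ↥S = 2),
        (fS S).card = 2 * e := by
      rw [hfilt, Finset.sum_congr rfl hr, Finset.sum_const, smul_eq_mul, h3, mul_comm]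
    rw [hleft, hright]
  -- complement counting
  set Cpl : Finset G := Finset.univ.filter (fun g : G => ∀ S ∈ Sp, g ∉ S) with hCpl
  have hsplit : Cpl.card + (Finset.univ.filter (fun g : G => ¬ ∀ S ∈ Sp, g ∉ S)).card
      = Fintype.card G := by
    rw [hCpl, Finset.card_filter_add_card_filter_not, Finset.card_univ]
  have hBeq : (Finset.univ.filter (fun g : G => ¬ ∀ S ∈ Sp, g ∉ S))
      = insert 0 (Sp.biUnion fS) := by
    ext g
    simp only [Finset.mem_filter, Finset.mem_univ, true_and, Finset.mem_insert,
      Finset.mem_biUnion, hfS, not_forall]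
    constructor
    · rintro ⟨S, hS, hg⟩
      simp only [not_not] at hg
      by_cases h0 : g = 0
      · exact Or.inl h0
      · exact Or.inr ⟨S, hS, by simp [hg, h0]⟩
    · rintro (rfl | ⟨S, hS, hg⟩)
      · obtain ⟨S, hS⟩ := hSpne
        exact ⟨S, hS, fun h => h S.zero_mem⟩
      · have hg1 : g ∈ S := by
          have := hg
          tauto
        exact ⟨S, hS, fun h => h hg1⟩
  have h0notin : (0:G) ∉ Sp.biUnion fS := by
    intro h
    rw [Finset.mem_biUnion] at h
    obtain ⟨S, _, hg⟩ := h
    simp [hfS] at hg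
  -- the main counting equation
  have hmain : Fintype.card G = Cpl.card + 1 + ((2 ^ m - 1) + 2 * e) := by
    rw [← hsplit, hBeq, Finset.card_insert_of_notMem h0notin, hA, hsum]
    ring
  -- Cpl.card = 6 * F.card
  have hC6 : Cpl.card = 6 * F.card := by
    have := congrArg Multiset.card hDF
    rw [hcard6] at this
    exact this.symm
  -- arithmetic
  obtain ⟨k, rfl⟩ : ∃ k, m = k + 1 := ⟨m - 1, by omega⟩
  rw [hcard, hC6] at hmain
  have hQd : 1 ≤ 2 ^ ℓ * d := by
    have hd1 : 1 ≤ d := hd.pos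
    have hl1 : 1 ≤ 2 ^ ℓ := Nat.one_le_two_pow
    nlinarith
  have hpow : (2:ℕ) ^ (k + 1 + ℓ) * d = 2 * (2 ^ k * (2 ^ ℓ * d)) := by ring
  have h2k : (1:ℕ) ≤ 2 ^ k := Nat.one_le_two_pow
  have h2k1 : (2:ℕ) ^ (k + 1) = 2 * 2 ^ k := by ring
  rw [hpow, h2k1] at hmain
  have hsub : 2 ^ ℓ * d - 1 + 1 = 2 ^ ℓ * d := Nat.sub_add_cancel hQd
  have hkey : 2 ^ k * (2 ^ ℓ * d - 1) + 2 ^ k = 2 ^ k * (2 ^ ℓ * d) := by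
    calc 2 ^ k * (2 ^ ℓ * d - 1) + 2 ^ k = 2 ^ k * ((2 ^ ℓ * d - 1) + 1) := by ring
    _ = 2 ^ k * (2 ^ ℓ * d) := by rw [hsub]
  simp only [Nat.add_sub_cancel]
  set x := 2 ^ k * (2 ^ ℓ * d) with hx
  set y := 2 ^ k * (2 ^ ℓ * d - 1) with hy
  set P := (2:ℕ) ^ k with hP
  unfold Nat.ModEq
  omega
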